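/- arXiv:1202.2341 — 4 statements merged into one kernel-verified Lean document; each statement's English description precedes it below -/
import Mathlib

section
/- For all real numbers a, b > 0, the inequality 2(a - b)^2 ≤ (a^2 - b^2) · log(a/b) holds. -/
open Real Set

lemma key_deriv {x : ℝ} (hx0 : 0 < x) :
    HasDerivAt (fun x : ℝ => (x + 1) * Real.log x - 2 * (x - 1))
      (Real.log x + (x + 1) * x⁻¹ - 2) x := by
  have h := (((hasDerivAt_id x).add_const 1).mul (Real.hasDerivAt_log hx0.ne')).sub
    (((hasDerivAt_id x).sub_const 1).const_mul 2)
  exact h.congr_deriv (by simp)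

lemma key_aux {x : ℝ} (hx : 1 ≤ x) : 2 * (x - 1) ≤ (x + 1) * Real.log x := by
  have hmono : MonotoneOn (fun x : ℝ => (x + 1) * Real.log x - 2 * (x - 1)) (Set.Ici 1) := by
    apply monotoneOn_of_deriv_nonneg (convex_Ici 1)
    · apply ContinuousOn.sub
      · exact (continuousOn_id.add continuousOn_const).mul
          (Real.continuousOn_log.mono (by intro y hy; simp at hy ⊢; linarith))
      · fun_prop
    · intro y hy
      rw [interior_Ici] at hy
      have hy0 : (0:ℝ) < y := lt_trans one_pos hy
      exact ((key_deriv hy0).differentiableAt).differentiableWithinAt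
    · intro y hy
      rw [interior_Ici] at hy
      have hy0 : (0:ℝ) < y := lt_trans one_pos hy
      rw [(key_deriv hy0).deriv]
      have hlog : 1 - y⁻¹ ≤ Real.log y := Real.one_sub_inv_le_log_of_pos hy0
      have h1 : y⁻¹ * y = 1 := inv_mul_cancel₀ hy0.ne'
      nlinarith [hy0.le]
  have h := hmono (Set.self_mem_Ici) (Set.mem_Ici.mpr hx) hx
  simp at h
  nlinarith [h]

theorem two_mul_sq_sub_le_sq_diff_mul_log (a b : ℝ) (ha : 0 < a) (hb : 0 < b) :
    2 * (a - b) ^ 2 ≤ (a ^ 2 - b ^ 2) * Real.log (a / b) := by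
  rcases le_total b a with h | h
  · have hx : 1 ≤ a / b := (one_le_div hb).mpr h
    have hk := key_aux hx
    have hab : 0 ≤ a - b := by linarith
    have hlog : Real.log (a / b) = Real.log (a/b) := rfl
    have h2 : 2 * (a/b - 1) * (a/b - 1) ≤ (a/b + 1) * Real.log (a/b) * (a/b - 1) := by
      nlinarith [hk, sub_nonneg.mpr hx]
    have hb2 : (0:ℝ) < b^2 := by positivity
    have key : 2 * (a - b)^2 ≤ (a^2 - b^2) * Real.log (a/b) := by
      have e1 : a / b - 1 = (a - b) / b := by field_simp
      have e2 : a / b + 1 = (a + b) / b := by field_simp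
      rw [e1, e2] at h2
      have := mul_le_mul_of_nonneg_left h2 hb2.le
      calc 2 * (a - b)^2 = b^2 * (2 * ((a-b)/b) * ((a-b)/b)) := by field_simp
        _ ≤ b^2 * ((a+b)/b * Real.log (a/b) * ((a-b)/b)) := this
        _ = (a^2 - b^2) * Real.log (a/b) := by field_simp; ring
    exact key
  · have hx : 1 ≤ b / a := (one_le_div ha).mpr h
    have hk := key_aux hx
    have h2 : 2 * (b/a - 1) * (b/a - 1) ≤ (b/a + 1) * Real.log (b/a) * (b/a - 1) := by
      nlinarith [hk, sub_nonneg.mpr hx]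
    have ha2 : (0:ℝ) < a^2 := by positivity
    have hlogswap : Real.log (a / b) = - Real.log (b / a) := by
      rw [← Real.log_inv]; congr 1; field_simp
    have key : 2 * (b - a)^2 ≤ (b^2 - a^2) * Real.log (b/a) := by
      have e1 : b / a - 1 = (b - a) / a := by field_simp
      have e2 : b / a + 1 = (b + a) / a := by field_simp
      rw [e1, e2] at h2
      have := mul_le_mul_of_nonneg_left h2 ha2.le
      calc 2 * (b - a)^2 = a^2 * (2 * ((b-a)/a) * ((b-a)/a)) := by field_simp
        _ ≤ a^2 * ((b+a)/a * Real.log (b/a) * ((b-a)/a)) := this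
        _ = (b^2 - a^2) * Real.log (b/a) := by field_simp; ring
    rw [hlogswap]
    nlinarith [key]
end

section
/- Let p ∈ (1,2] and let t ∈ (0,1). Then -∑_{k=0}^∞ p^k · log(1 - t²/p^(2k)) = ∑_{k=0}^∞ (p^(2k+1)/(p^(2k+1) - 1)) · t^(2(k+1))/(k+1), and this quantity is at most -(p/(p-1)) · log(1 - t²). -/
theorem log_series_identity_and_bound (p t : ℝ) (hp1 : 1 < p) (hp2 : p ≤ 2)
    (ht0 : 0 < t) (ht1 : t < 1) :
    (∑' k : ℕ, -(p ^ k * Real.log (1 - t ^ 2 / p ^ (2 * k))) =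
      ∑' k : ℕ, (p ^ (2 * k + 1) / (p ^ (2 * k + 1) - 1)) *
        t ^ (2 * (k + 1)) / (k + 1)) ∧
    (∑' k : ℕ, -(p ^ k * Real.log (1 - t ^ 2 / p ^ (2 * k)))) ≤
      -(p / (p - 1)) * Real.log (1 - t ^ 2) := by
  have hp0 : (0:ℝ) < p := lt_trans one_pos hp1
  have hpne : p ≠ 0 := ne_of_gt hp0
  have ht2 : t ^ 2 < 1 := by nlinarith
  have ht2pos : 0 < t ^ 2 := by positivity
  -- the double-sum function
  set f : ℕ → ℕ → ℝ := fun j k => p ^ k * ((t ^ 2 / p ^ (2 * k)) ^ (j + 1) / (j + 1))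
    with hf
  -- rewrite f j k as a geometric in k
  have hf_geom : ∀ j k, f j k =
      ((t ^ 2) ^ (j + 1) / (j + 1)) * ((p ^ (2 * j + 1))⁻¹) ^ k := by
    intro j k
    have hpk : (p : ℝ) ^ (2 * k) ≠ 0 := by positivity
    have hjk : (p:ℝ) ^ (2 * k * (j + 1)) = p ^ k * p ^ (k * (2 * j + 1)) := by
      rw [← pow_add]; ring_nf
    have hk1 : ((j:ℝ) + 1) ≠ 0 := by positivity
    have h2 : (p:ℝ) ^ (k * (2*j+1)) ≠ 0 := by positivity
    simp only [hf, div_pow, ← pow_mul, div_div]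
    rw [show (p ^ (2*j+1))⁻¹ ^ k = (p ^ (k*(2*j+1)))⁻¹ by
      rw [← inv_pow, ← pow_mul, mul_comm, inv_pow]]
    rw [show 2 * k * (j+1) = k + k * (2*j+1) by ring, pow_add]
    field_simp
  have hr_pos : ∀ j : ℕ, (0:ℝ) < (p ^ (2 * j + 1))⁻¹ := by
    intro j; positivity
  have hr_lt : ∀ j : ℕ, (p ^ (2 * j + 1) : ℝ)⁻¹ < 1 := by
    intro j
    rw [inv_lt_one_iff₀]
    right
    exact one_lt_pow₀ hp1 (by omega)
  have hq_gt : ∀ j : ℕ, (1:ℝ) < p ^ (2 * j + 1) := fun j => one_lt_pow₀ hp1 (by omega)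
  -- sum over k for fixed j
  have hsum_k : ∀ j : ℕ, HasSum (fun k => f j k)
      ((p ^ (2 * j + 1) / (p ^ (2 * j + 1) - 1)) * t ^ (2 * (j + 1)) / (j + 1)) := by
    intro j
    have hg := (hasSum_geometric_of_lt_one (le_of_lt (hr_pos j)) (hr_lt j)).mul_left
      ((t ^ 2) ^ (j + 1) / (j + 1))
    have : ((t ^ 2) ^ (j + 1) / ((j:ℝ) + 1)) * (1 - (p ^ (2 * j + 1))⁻¹)⁻¹ =
        (p ^ (2 * j + 1) / (p ^ (2 * j + 1) - 1)) * t ^ (2 * (j + 1)) / (j + 1) := by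
      have hq := hq_gt j
      have hqne : (p:ℝ) ^ (2 * j + 1) ≠ 0 := by positivity
      have hq1 : (p:ℝ) ^ (2 * j + 1) - 1 ≠ 0 := by linarith
      have h1ne : ((j:ℝ) + 1) ≠ 0 := by positivity
      rw [pow_mul]
      field_simp
    rw [← this]
    rw [show (fun k => f j k) = fun k => (t ^ 2) ^ (j + 1) / ((j:ℝ) + 1) * (p ^ (2 * j + 1))⁻¹ ^ k from funext (hf_geom j)]
    exact hg
  -- sum over j for fixed k
  have hx_lt : ∀ k : ℕ, |t ^ 2 / p ^ (2 * k)| < 1 := by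
    intro k
    have hpk1 : (1:ℝ) ≤ p ^ (2 * k) := one_le_pow₀ (le_of_lt hp1)
    rw [abs_of_pos (by positivity)]
    calc t ^ 2 / p ^ (2 * k) ≤ t ^ 2 / 1 := by
          apply div_le_div_of_nonneg_left (le_of_lt ht2pos) one_pos hpk1
      _ = t ^ 2 := by rw [div_one]
      _ < 1 := ht2
  have hsum_j : ∀ k : ℕ, HasSum (fun j => f j k)
      (-(p ^ k * Real.log (1 - t ^ 2 / p ^ (2 * k)))) := by
    intro k
    have := (Real.hasSum_pow_div_log_of_abs_lt_one (hx_lt k)).mul_left (p ^ k)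
    simpa [mul_neg] using this
  -- the bound sequence
  have hbound : HasSum (fun j : ℕ => (p / (p - 1)) * ((t ^ 2) ^ (j + 1) / (j + 1)))
      ((p / (p - 1)) * (-Real.log (1 - t ^ 2))) :=
    (Real.hasSum_pow_div_log_of_abs_lt_one (by rw [abs_of_pos ht2pos]; exact ht2)).mul_left _
  have hb_nonneg : ∀ j : ℕ, (0:ℝ) ≤
      (p ^ (2 * j + 1) / (p ^ (2 * j + 1) - 1)) * t ^ (2 * (j + 1)) / (j + 1) := by
    intro j
    have hq := hq_gt j
    have : (0:ℝ) < p ^ (2 * j + 1) - 1 := by linarith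
    positivity
  have hb_le : ∀ j : ℕ,
      (p ^ (2 * j + 1) / (p ^ (2 * j + 1) - 1)) * t ^ (2 * (j + 1)) / (j + 1) ≤
      (p / (p - 1)) * ((t ^ 2) ^ (j + 1) / (j + 1)) := by
    intro j
    have hq := hq_gt j
    have hq1 : (0:ℝ) < p ^ (2 * j + 1) - 1 := by linarith
    have hp1' : (0:ℝ) < p - 1 := by linarith
    have hple : p ≤ p ^ (2 * j + 1) := by
      calc p = p ^ 1 := (pow_one p).symm
        _ ≤ p ^ (2 * j + 1) := pow_le_pow_right₀ (le_of_lt hp1) (by omega)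
    have hfrac : p ^ (2 * j + 1) / (p ^ (2 * j + 1) - 1) ≤ p / (p - 1) := by
      rw [div_le_div_iff₀ hq1 hp1']
      nlinarith
    have htj : (0:ℝ) ≤ t ^ (2 * (j + 1)) / (j + 1) := by positivity
    have hpow : t ^ (2 * (j + 1)) = (t ^ 2) ^ (j + 1) := pow_mul t 2 (j + 1)
    rw [mul_div_assoc, ← hpow]
    exact mul_le_mul_of_nonneg_right hfrac htj
  have hb_summable : Summable (fun j : ℕ =>
      (p ^ (2 * j + 1) / (p ^ (2 * j + 1) - 1)) * t ^ (2 * (j + 1)) / (j + 1)) :=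
    Summable.of_nonneg_of_le hb_nonneg hb_le hbound.summable
  -- summability of the double sum
  have hf_nonneg : ∀ q : ℕ × ℕ, 0 ≤ f q.1 q.2 := by
    intro ⟨j, k⟩
    have hpk1 : (1:ℝ) ≤ p ^ (2 * k) := one_le_pow₀ (le_of_lt hp1)
    have : (0:ℝ) ≤ t ^ 2 / p ^ (2 * k) := by positivity
    simp only [hf]
    positivity
  have hf_summable : Summable (Function.uncurry f) := by
    refine (summable_prod_of_nonneg fun q => hf_nonneg q).2
      ⟨fun j => (hsum_k j).summable, ?_⟩
    convert hb_summable using 1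
    funext j
    exact (hsum_k j).tsum_eq
  -- main identity
  have hmain : ∑' k : ℕ, -(p ^ k * Real.log (1 - t ^ 2 / p ^ (2 * k))) =
      ∑' j : ℕ, (p ^ (2 * j + 1) / (p ^ (2 * j + 1) - 1)) * t ^ (2 * (j + 1)) / (j + 1) := by
    calc ∑' k : ℕ, -(p ^ k * Real.log (1 - t ^ 2 / p ^ (2 * k)))
        = ∑' (k) (j), f j k := by
          congr 1; funext k; exact (hsum_j k).tsum_eq.symm
      _ = ∑' (j) (k), f j k := Summable.tsum_comm hf_summable
      _ = ∑' j : ℕ, (p ^ (2 * j + 1) / (p ^ (2 * j + 1) - 1)) * t ^ (2 * (j + 1)) / (j + 1) := by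
          congr 1; funext j; exact (hsum_k j).tsum_eq
  refine ⟨hmain, ?_⟩
  rw [hmain, neg_mul_comm]
  exact le_trans (Summable.tsum_le_tsum hb_le hb_summable hbound.summable)
    (le_of_eq hbound.tsum_eq)
end

section
/- Let A be a symmetric positive semidefinite d×d real matrix, f(x) = ⟨Ax, x⟩, and V(x) = exp(c f(x)) with c = 1/(4‖A‖_op), where ‖A‖_op is the operator norm. For the Ornstein-Uhlenbeck operator L f = Δf - ⟨x, ∇f⟩ on ℝ^d, one has ‖∇f(x)‖² ≤ -a · (LV(x)/V(x)) + b for all x ∈ ℝ^d, with a = 16‖A‖_op² and b = 8 · trace(A) · ‖A‖_op. -/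
/-- The Laplacian on `ℝ^d`, as the sum of second partial derivatives. -/
noncomputable def laplacian {d : ℕ} (f : EuclideanSpace ℝ (Fin d) → ℝ)
    (x : EuclideanSpace ℝ (Fin d)) : ℝ :=
  ∑ i : Fin d,
    fderiv ℝ (fun y => fderiv ℝ f y (EuclideanSpace.single i 1)) x
      (EuclideanSpace.single i 1)

/-- The Ornstein-Uhlenbeck generator `L f = Δf - ⟨x, ∇f⟩` on `ℝ^d`. -/
noncomputable def ouGen {d : ℕ} (f : EuclideanSpace ℝ (Fin d) → ℝ)
    (x : EuclideanSpace ℝ (Fin d)) : ℝ :=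
  laplacian f x - inner ℝ x (gradient f x)

/-- The operator norm of a matrix acting on Euclidean space. -/
noncomputable def matOpNorm {d : ℕ} (A : Matrix (Fin d) (Fin d) ℝ) : ℝ :=
  ‖LinearMap.toContinuousLinearMap (Matrix.toEuclideanLin A)‖

open scoped RealInnerProductSpace

theorem quadratic_form_lyapunov (d : ℕ) (hd : 1 ≤ d)
    (A : Matrix (Fin d) (Fin d) ℝ) (hsymm : A.IsSymm) (hpsd : A.PosSemidef)
    (hop : 0 < matOpNorm A)
    (f V : EuclideanSpace ℝ (Fin d) → ℝ)
    (hf : ∀ x, f x = inner ℝ (Matrix.toEuclideanLin A x) x)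
    (hV : ∀ x, V x = Real.exp ((1 / (4 * matOpNorm A)) * f x)) :
    ∀ x : EuclideanSpace ℝ (Fin d),
      ‖gradient f x‖ ^ 2 ≤
        -(16 * matOpNorm A ^ 2) * (ouGen V x / V x) +
          8 * A.trace * matOpNorm A := by
  classical
  intro x
  set M : ℝ := matOpNorm A with hM
  set c : ℝ := 1 / (4 * M) with hc
  set T : EuclideanSpace ℝ (Fin d) →L[ℝ] EuclideanSpace ℝ (Fin d) :=
    LinearMap.toContinuousLinearMap (Matrix.toEuclideanLin A) with hT
  have hMT : M = ‖T‖ := rfl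
  have hsymT : ∀ u v : EuclideanSpace ℝ (Fin d), ⟪T u, v⟫ = ⟪u, T v⟫ :=
    fun u v => (Matrix.isHermitian_iff_isSymmetric.mp hpsd.1) u v
  -- derivative of f
  have hfd : ∀ y, HasFDerivAt f ((2:ℝ) • (innerSL ℝ (T y))) y := by
    intro y
    have hfun : f = fun z => ⟪T z, z⟫ := funext fun z => hf z
    rw [hfun]
    refine ((T.hasFDerivAt (x := y)).inner ℝ (hasFDerivAt_id y)).congr_fderiv ?_
    ext h
    simp only [ContinuousLinearMap.smul_apply, innerSL_apply_apply,
      ContinuousLinearMap.coe_comp', Function.comp_apply, fderivInnerCLM_apply,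
      ContinuousLinearMap.prod_apply, ContinuousLinearMap.coe_id', id_eq, smul_eq_mul]
    rw [hsymT h y, real_inner_comm h (T y)]
    ring
  have hgradf : gradient f x = (2:ℝ) • T x := by
    have hg : HasGradientAt f ((2:ℝ) • T x) x := by
      rw [hasGradientAt_iff_hasFDerivAt]
      refine (hfd x).congr_fderiv ?_
      ext h
      simp [real_inner_smul_left, InnerProductSpace.toDual_apply_apply]
    exact hg.gradient
  -- derivative of V
  have hVd : ∀ y, HasFDerivAt V ((2*c*V y) • innerSL ℝ (T y)) y := by
    intro y
    have hfun : V = fun z => Real.exp (c * f z) := funext fun z => hV z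
    rw [hfun]
    have h2 := ((hfd y).const_mul c).exp
    refine h2.congr_fderiv ?_
    ext h
    simp only [ContinuousLinearMap.smul_apply, innerSL_apply_apply, smul_eq_mul]
    ring
  have hgradV : gradient V x = (2*c*V x) • T x := by
    have hg : HasGradientAt V ((2*c*V x) • T x) x := by
      rw [hasGradientAt_iff_hasFDerivAt]
      refine (hVd x).congr_fderiv ?_
      ext h
      simp [real_inner_smul_left, InnerProductSpace.toDual_apply_apply]
    exact hg.gradient
  have hVpos : 0 < V x := by rw [hV x]; exact Real.exp_pos _
  -- laplacian of V
  have key : ∀ i : Fin d,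
      fderiv ℝ (fun y => fderiv ℝ V y (EuclideanSpace.single i 1)) x (EuclideanSpace.single i 1)
      = 2*c*(V x * ⟪T (EuclideanSpace.single i 1), EuclideanSpace.single i 1⟫)
        + 4*c^2*(V x)*(⟪T x, EuclideanSpace.single i 1⟫)^2 := by
    intro i
    set e : EuclideanSpace ℝ (Fin d) := EuclideanSpace.single i 1 with he
    have hfun : (fun y => fderiv ℝ V y e) = fun y => (2*c) * (V y * ⟪T y, e⟫) := by
      funext y
      rw [(hVd y).fderiv]
      simp only [ContinuousLinearMap.smul_apply, innerSL_apply_apply, smul_eq_mul]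
      ring
    rw [hfun]
    have hmul : HasFDerivAt (fun y => (2*c) * (V y * ⟪T y, e⟫))
        ((2*c) • (V x • ((fderivInnerCLM ℝ (T x, e)).comp
            (T.prod (0 : EuclideanSpace ℝ (Fin d) →L[ℝ] EuclideanSpace ℝ (Fin d))))
          + (⟪T x, e⟫) • ((2*c*V x) • innerSL ℝ (T x)))) x :=
      ((hVd x).mul ((T.hasFDerivAt (x := x)).inner ℝ (hasFDerivAt_const e x))).const_mul (2*c)
    rw [hmul.fderiv]
    simp only [ContinuousLinearMap.smul_apply, ContinuousLinearMap.add_apply,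
      ContinuousLinearMap.coe_comp', Function.comp_apply, fderivInnerCLM_apply,
      ContinuousLinearMap.prod_apply, ContinuousLinearMap.zero_apply, innerSL_apply_apply,
      smul_eq_mul, inner_zero_right]
    ring
  have htr : ∑ i : Fin d, ⟪T (EuclideanSpace.single i 1), (EuclideanSpace.single i (1:ℝ))⟫
      = A.trace := by
    have h1 : ∀ i : Fin d, ⟪T (EuclideanSpace.single i 1),
        (EuclideanSpace.single i (1:ℝ))⟫ = A i i := by
      intro i
      rw [EuclideanSpace.inner_single_right]
      simp [hT, Matrix.toEuclideanLin_apply, Matrix.mulVec_single]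
    simp [h1, Matrix.trace, Matrix.diag]
  have hnrm : ∑ i : Fin d, (⟪T x, EuclideanSpace.single i (1:ℝ)⟫)^2 = ‖T x‖^2 := by
    rw [← real_inner_self_eq_norm_sq, PiLp.inner_apply]
    simp [EuclideanSpace.inner_single_right, pow_two]
  have hlap : laplacian V x = 2*c*(V x)*A.trace + 4*c^2*(V x)*‖T x‖^2 := by
    have e1 : ∑ i : Fin d, 2*c*(V x * ⟪T (EuclideanSpace.single i 1), EuclideanSpace.single i 1⟫)
        = 2*c*(V x*A.trace) := by
      rw [← Finset.mul_sum, ← Finset.mul_sum, htr]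
    have e2 : ∑ i : Fin d, 4*c^2*(V x)*(⟪T x, EuclideanSpace.single i 1⟫)^2
        = 4*c^2*(V x)*‖T x‖^2 := by
      rw [← Finset.mul_sum, hnrm]
    rw [laplacian]
    simp only [key]
    rw [Finset.sum_add_distrib, e1, e2]
    ring
  have hou : ouGen V x = V x * (2*c*A.trace + 4*c^2*‖T x‖^2 - 2*c*⟪T x, x⟫) := by
    rw [ouGen, hlap, hgradV, real_inner_smul_right, real_inner_comm x (T x)]
    ring
  -- key operator inequality
  open scoped MatrixOrder in
  have hkey : ‖T x‖^2 ≤ M * ⟪T x, x⟫ := by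
    set S : Matrix (Fin d) (Fin d) ℝ := CFC.sqrt A with hS
    have hSpsd : S.PosSemidef := Matrix.nonneg_iff_posSemidef.mp (CFC.sqrt_nonneg A)
    set TS : EuclideanSpace ℝ (Fin d) →L[ℝ] EuclideanSpace ℝ (Fin d) :=
      LinearMap.toContinuousLinearMap (Matrix.toEuclideanLin S) with hTS
    have hcomp : ∀ v, TS (TS v) = T v := by
      intro v
      show Matrix.toEuclideanLin S (Matrix.toEuclideanLin S v) = Matrix.toEuclideanLin A v
      simp only [Matrix.toEuclideanLin_apply, Equiv.apply_symm_apply, Matrix.mulVec_mulVec]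
      rw [hS, CFC.sqrt_mul_sqrt_self A hpsd.nonneg]
    have hTSsa : IsSelfAdjoint TS :=
      ContinuousLinearMap.isSelfAdjoint_iff_isSymmetric.mpr
        (Matrix.isHermitian_iff_isSymmetric.mp hSpsd.1)
    have hsymTS : ∀ u v : EuclideanSpace ℝ (Fin d), ⟪TS u, v⟫ = ⟪u, TS v⟫ :=
      fun u v => (Matrix.isHermitian_iff_isSymmetric.mp hSpsd.1) u v
    have hcomp' : ContinuousLinearMap.adjoint TS ∘L TS = T := by
      rw [← ContinuousLinearMap.star_eq_adjoint, hTSsa.star_eq]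
      apply ContinuousLinearMap.ext
      intro v
      rw [ContinuousLinearMap.comp_apply]
      exact hcomp v
    have hnT : M = ‖TS‖ * ‖TS‖ := by
      rw [hMT, ← hcomp', ContinuousLinearMap.norm_adjoint_comp_self]
    have hTSx : ‖TS x‖^2 = ⟪T x, x⟫ := by
      rw [← real_inner_self_eq_norm_sq, ← hsymTS (TS x) x, hcomp x]
    calc ‖T x‖^2 = ‖TS (TS x)‖^2 := by rw [hcomp x]
      _ ≤ (‖TS‖ * ‖TS x‖)^2 := by
          apply pow_le_pow_left₀ (norm_nonneg _) (TS.le_opNorm (TS x))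
      _ = M * ⟪T x, x⟫ := by rw [← hTSx, hnT]; ring
  -- final arithmetic
  rw [hgradf, hou, norm_smul, mul_comm (V x), mul_div_assoc, div_self (ne_of_gt hVpos), mul_one]
  have harith : -(16 * M ^ 2) * (2*c*A.trace + 4*c^2*‖T x‖^2 - 2*c*⟪T x, x⟫)
      + 8 * A.trace * M = -4*‖T x‖^2 + 8*M*⟪T x, x⟫ := by
    rw [hc]
    field_simp
    ring
  rw [harith]
  have h2 : ‖(2:ℝ)‖ = 2 := by norm_num
  rw [h2]
  nlinarith [hkey, norm_nonneg (T x)]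
end

section
/- Let μ be a probability measure on ℕ with density proportional to e^{-U} with respect to counting measure, where U : ℕ → ℝ. If μ is ultra log-concave, i.e., the discrete Laplacian ΔU(x) := U(x+1) - 2U(x) + U(x-1) satisfies ΔU(x) ≥ log(1 + 1/x) for all x ≥ 1, then the birth-death rates λ_x = 1 and ν_x = e^{U(x)-U(x-1)}·1_{x≠0} satisfy λ_x - λ_{x+1} + ν_{x+1} - ν_x ≥ ν_1 = e^{U(1)-U(0)} for all integers x ≥ 2. -/
lemma ulc_key (U : ℕ → ℝ)
    (hU : ∀ x : ℕ, 1 ≤ x →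
      U (x + 1) - 2 * U x + U (x - 1) ≥ Real.log (1 + 1 / (x : ℝ))) :
    ∀ x : ℕ, 1 ≤ x →
      Real.exp (U x - U (x - 1)) ≥ (x : ℝ) * Real.exp (U 1 - U 0) := by
  intro x hx
  induction x with
  | zero => omega
  | succ n ih =>
    rcases Nat.eq_or_lt_of_le hx with h | h
    · simp [← h]
    · have hn : 1 ≤ n := by omega
      have ihn := ih hn
      have hpos : (0 : ℝ) < 1 + 1 / (n : ℝ) := by
        have : (0 : ℝ) < (n : ℝ) := by exact_mod_cast hn
        positivity
      have h1 : Real.exp (U (n + 1) - 2 * U n + U (n - 1)) ≥ 1 + 1 / (n : ℝ) := by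
        calc Real.exp (U (n + 1) - 2 * U n + U (n - 1))
            ≥ Real.exp (Real.log (1 + 1 / (n : ℝ))) := Real.exp_le_exp.2 (hU n hn)
          _ = 1 + 1 / (n : ℝ) := Real.exp_log hpos
      have hsplit : U (n + 1) - U n =
          (U (n + 1) - 2 * U n + U (n - 1)) + (U n - U (n - 1)) := by ring
      have hmain : Real.exp (U (n + 1) - U n) ≥
          (1 + 1 / (n : ℝ)) * ((n : ℝ) * Real.exp (U 1 - U 0)) := by
        rw [hsplit, Real.exp_add]
        exact mul_le_mul h1 ihn (by positivity) (by linarith)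
      have hnn : (0 : ℝ) < (n : ℝ) := by exact_mod_cast hn
      have hrw : (1 + 1 / (n : ℝ)) * ((n : ℝ) * Real.exp (U 1 - U 0)) =
          ((n : ℝ) + 1) * Real.exp (U 1 - U 0) := by
        field_simp
      rw [hrw] at hmain
      simpa [Nat.add_sub_cancel, Nat.cast_succ] using hmain

theorem ultra_log_concave_rate_bound (U : ℕ → ℝ)
    (hU : ∀ x : ℕ, 1 ≤ x →
      U (x + 1) - 2 * U x + U (x - 1) ≥ Real.log (1 + 1 / (x : ℝ)))
    (lam ν : ℕ → ℝ) (hlam : ∀ x, lam x = 1) (hν0 : ν 0 = 0)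
    (hν : ∀ x : ℕ, 1 ≤ x → ν x = Real.exp (U x - U (x - 1))) :
    ∀ x : ℕ, 2 ≤ x →
      lam x - lam (x + 1) + ν (x + 1) - ν x ≥ Real.exp (U 1 - U 0) := by
  intro x hx
  have hx1 : 1 ≤ x := by omega
  have hνx := hν x hx1
  have hνx1 := hν (x + 1) (by omega)
  have hkey := ulc_key U hU x hx1
  have hxpos : (0 : ℝ) < (x : ℝ) := by exact_mod_cast hx1
  have hpos : (0 : ℝ) < 1 + 1 / (x : ℝ) := by positivity
  have h1 : Real.exp (U (x + 1) - 2 * U x + U (x - 1)) ≥ 1 + 1 / (x : ℝ) := by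
    calc Real.exp (U (x + 1) - 2 * U x + U (x - 1))
        ≥ Real.exp (Real.log (1 + 1 / (x : ℝ))) := Real.exp_le_exp.2 (hU x hx1)
      _ = 1 + 1 / (x : ℝ) := Real.exp_log hpos
  have hsplit : U (x + 1) - U x =
      (U (x + 1) - 2 * U x + U (x - 1)) + (U x - U (x - 1)) := by ring
  have hdiff : Real.exp (U (x + 1) - U x) - Real.exp (U x - U (x - 1)) =
      (Real.exp (U (x + 1) - 2 * U x + U (x - 1)) - 1) * Real.exp (U x - U (x - 1)) := by
    rw [hsplit, Real.exp_add]; ring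
  have hfac : Real.exp (U (x + 1) - 2 * U x + U (x - 1)) - 1 ≥ 1 / (x : ℝ) := by
    linarith
  have hbound : (Real.exp (U (x + 1) - 2 * U x + U (x - 1)) - 1) *
      Real.exp (U x - U (x - 1)) ≥ (1 / (x : ℝ)) * ((x : ℝ) * Real.exp (U 1 - U 0)) := by
    have hfd : (0:ℝ) < 1 / (x:ℝ) := by positivity
    exact mul_le_mul hfac hkey (by positivity) (by linarith)
  have hsimp : (1 / (x : ℝ)) * ((x : ℝ) * Real.exp (U 1 - U 0)) = Real.exp (U 1 - U 0) := by
    field_simp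
  rw [hlam x, hlam (x + 1), hνx, hνx1]
  have hxm : (x + 1) - 1 = x := by omega
  rw [hxm]
  rw [hsimp] at hbound
  linarith [hdiff, hbound]
end
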